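/- Let p, q, r, c₀ be real numbers with q > −1, let θ be a positive even integer, and let n ≠ m be integers with n, m ≥ 1 and max(n, m) < (p − 1 − θ)/2. Suppose yₙ, yₘ : ℝ → ℝ are polynomial functions of degrees exactly n and m respectively, such that for i ∈ {n, m} and all real x: x(x−r)(x+1)yᵢ''(x) + ((θ+2−p)x² + (q+θ+1+r(p−2))x − r(q+1))yᵢ'(x) − (i(i+1+θ−p)(x−r) + c₀)yᵢ(x) = 0. Then ∫₀^∞ (x−r)^θ x^q (x+1)^{−(p+q)} yₙ(x) yₘ(x) dx = 0. -/

import Mathlib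

open Polynomial MeasureTheory Set Filter Topology

lemma poly_growth_bound (T : Polynomial ℝ) :
    ∃ C : ℝ, 0 ≤ C ∧ ∀ x : ℝ, 0 ≤ x → |T.eval x| ≤ C * (1 + x) ^ T.natDegree := by
  refine ⟨∑ i ∈ Finset.range (T.natDegree + 1), |T.coeff i|,
    Finset.sum_nonneg fun _ _ => abs_nonneg _, fun x hx => ?_⟩
  rw [Polynomial.eval_eq_sum_range]
  refine (Finset.abs_sum_le_sum_abs _ _).trans ?_
  rw [Finset.sum_mul]
  refine Finset.sum_le_sum fun i hi => ?_
  rw [abs_mul, abs_pow, abs_of_nonneg hx]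
  have h1x : (1:ℝ) ≤ 1 + x := by linarith
  have hxi : x ^ i ≤ (1 + x) ^ T.natDegree := by
    calc x ^ i ≤ (1 + x) ^ i := pow_le_pow_left₀ hx (by linarith) i
      _ ≤ (1 + x) ^ T.natDegree :=
        pow_le_pow_right₀ h1x (Nat.lt_succ_iff.mp (Finset.mem_range.mp hi))
  exact mul_le_mul_of_nonneg_left hxi (abs_nonneg _)

theorem x1_finite_fisher_orthogonality
    (p q r c0 : ℝ) (hq : -1 < q)
    (θ : ℕ) (hθpos : 0 < θ) (hθeven : Even θ)
    (n m : ℤ) (hn : 1 ≤ n) (hm : 1 ≤ m) (hnm : n ≠ m)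
    (hdeg : ((max n m : ℤ) : ℝ) < (p - 1 - θ) / 2)
    (yn ym : ℝ → ℝ)
    (hynpoly : ∃ P : Polynomial ℝ, (∀ x, yn x = P.eval x) ∧ (P.natDegree : ℤ) = n)
    (hympoly : ∃ P : Polynomial ℝ, (∀ x, ym x = P.eval x) ∧ (P.natDegree : ℤ) = m)
    (heqn : ∀ x : ℝ,
      x * (x - r) * (x + 1) * deriv (deriv yn) x
        + ((θ + 2 - p) * x ^ 2 + (q + θ + 1 + r * (p - 2)) * x
            - r * (q + 1)) * deriv yn x
        - ((n : ℝ) * ((n : ℝ) + 1 + θ - p) * (x - r) + c0) * yn x = 0)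
    (heqm : ∀ x : ℝ,
      x * (x - r) * (x + 1) * deriv (deriv ym) x
        + ((θ + 2 - p) * x ^ 2 + (q + θ + 1 + r * (p - 2)) * x
            - r * (q + 1)) * deriv ym x
        - ((m : ℝ) * ((m : ℝ) + 1 + θ - p) * (x - r) + c0) * ym x = 0) :
    ∫ x in Set.Ioi (0 : ℝ),
      (x - r) ^ θ * x ^ q * (x + 1) ^ (-(p + q)) * yn x * ym x = 0 := by
  obtain ⟨P, hP, hPdeg⟩ := hynpoly
  obtain ⟨Q, hQ, hQdeg⟩ := hympoly
  have hyn : yn = fun x => P.eval x := funext hP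
  have hym : ym = fun x => Q.eval x := funext hQ
  subst hyn hym
  obtain ⟨k, rfl⟩ : ∃ k, θ = k + 1 := ⟨θ - 1, (Nat.succ_pred_eq_of_pos hθpos).symm⟩
  have hdP : deriv (fun x => P.eval x) = fun x => P.derivative.eval x :=
    funext fun x => (P.hasDerivAt x).deriv
  have hdP2 : deriv (fun x => P.derivative.eval x) = fun x => P.derivative.derivative.eval x :=
    funext fun x => (P.derivative.hasDerivAt x).deriv
  have hdQ : deriv (fun x => Q.eval x) = fun x => Q.derivative.eval x :=
    funext fun x => (Q.hasDerivAt x).deriv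
  have hdQ2 : deriv (fun x => Q.derivative.eval x) = fun x => Q.derivative.derivative.eval x :=
    funext fun x => (Q.derivative.hasDerivAt x).deriv
  rw [hdP] at heqn; rw [hdP2] at heqn
  rw [hdQ] at heqm; rw [hdQ2] at heqm
  push_cast at heqn heqm
  -- basic numerology
  have hNn : (P.natDegree : ℝ) = (n : ℝ) := by exact_mod_cast congrArg (Int.cast : ℤ → ℝ) hPdeg
  have hMm : (Q.natDegree : ℝ) = (m : ℝ) := by exact_mod_cast congrArg (Int.cast : ℤ → ℝ) hQdeg
  have hN1 : 1 ≤ P.natDegree := by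
    have := hPdeg ▸ hn; exact_mod_cast this
  have hM1 : 1 ≤ Q.natDegree := by
    have := hQdeg ▸ hm; exact_mod_cast this
  have hnR : (1:ℝ) ≤ (n:ℝ) := by exact_mod_cast hn
  have hmR : (1:ℝ) ≤ (m:ℝ) := by exact_mod_cast hm
  have hsum : (n:ℝ) + (m:ℝ) + (k:ℝ) + 2 < p := by
    push_cast at hdeg
    have h1 : (n:ℝ) ≤ (n:ℝ) ⊔ (m:ℝ) := le_max_left _ _
    have h2 : (m:ℝ) ≤ (n:ℝ) ⊔ (m:ℝ) := le_max_right _ _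
    linarith
  have hppos : 0 < p + q := by linarith
  -- the polynomials
  set W : Polynomial ℝ := P.derivative * Q - P * Q.derivative with hWdef
  set S : Polynomial ℝ := (X - C r) ^ (k+1) * W with hSdef
  set T : Polynomial ℝ := (X - C r) ^ (k+1) * (P * Q) with hTdef
  set Δ : ℝ := (n:ℝ) * ((n:ℝ) + 1 + ((k:ℝ)+1) - p) - (m:ℝ) * ((m:ℝ) + 1 + ((k:ℝ)+1) - p)
    with hΔdef
  set g : ℝ → ℝ := fun x => x ^ q * (x+1) ^ (-(p+q)) * T.eval x with hgdef
  set F : ℝ → ℝ := fun x => x ^ (q+1) * (x+1) ^ (1-p-q) * S.eval x with hFdef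
  have hSev : ∀ y : ℝ, S.eval y
      = (y - r) ^ (k+1) * (P.derivative.eval y * Q.eval y - P.eval y * Q.derivative.eval y) := by
    intro y
    simp only [hSdef, hWdef, eval_mul, eval_pow, eval_sub, eval_X, eval_C]
  have hSdev : ∀ y : ℝ, S.derivative.eval y
      = ((k:ℝ)+1) * (y - r) ^ k *
          (P.derivative.eval y * Q.eval y - P.eval y * Q.derivative.eval y)
        + (y - r) ^ (k+1) *
          (P.derivative.derivative.eval y * Q.eval y
            - P.eval y * Q.derivative.derivative.eval y) := by
    intro y
    simp only [hSdef, hWdef, Polynomial.derivative_mul, Polynomial.derivative_pow,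
      Polynomial.derivative_sub, Polynomial.derivative_X, Polynomial.derivative_C,
      eval_add, eval_mul, eval_pow, eval_sub, eval_X, eval_C, eval_one, eval_zero, Nat.add_sub_cancel,
      eval_natCast]
    push_cast
    ring
  have hTev : ∀ y : ℝ, T.eval y = (y - r) ^ (k+1) * (P.eval y * Q.eval y) := by
    intro y
    simp only [hTdef, eval_mul, eval_pow, eval_sub, eval_X, eval_C]
  have hpowdeg : ((X - C r : Polynomial ℝ) ^ (k+1)).natDegree ≤ k + 1 := by
    simp [Polynomial.natDegree_pow, Polynomial.natDegree_X_sub_C]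
  -- degree bounds
  have hTdeg : (T.natDegree : ℝ) ≤ (k:ℝ) + 1 + (n:ℝ) + (m:ℝ) := by
    have h1 : T.natDegree ≤ (k+1) + (P.natDegree + Q.natDegree) :=
      Polynomial.natDegree_mul_le.trans (add_le_add hpowdeg Polynomial.natDegree_mul_le)
    calc (T.natDegree : ℝ) ≤ (((k+1) + (P.natDegree + Q.natDegree) : ℕ) : ℝ) := by
          exact_mod_cast h1
      _ = (k:ℝ) + 1 + (n:ℝ) + (m:ℝ) := by push_cast [hNn, hMm]; ring
  have hSdeg : (S.natDegree : ℝ) ≤ (k:ℝ) + (n:ℝ) + (m:ℝ) := by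
    have h1 : (P.derivative * Q).natDegree ≤ (P.natDegree - 1) + Q.natDegree :=
      Polynomial.natDegree_mul_le.trans (Nat.add_le_add_right (Polynomial.natDegree_derivative_le P) _)
    have h2 : (P * Q.derivative).natDegree ≤ P.natDegree + (Q.natDegree - 1) :=
      Polynomial.natDegree_mul_le.trans (Nat.add_le_add_left (Polynomial.natDegree_derivative_le Q) _)
    have hW : W.natDegree ≤ P.natDegree + Q.natDegree - 1 :=
      (Polynomial.natDegree_sub_le _ _).trans (max_le (h1.trans (by omega)) (h2.trans (by omega)))
    have hS : S.natDegree ≤ k + (P.natDegree + Q.natDegree) :=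
      (Polynomial.natDegree_mul_le.trans (add_le_add hpowdeg hW)).trans (by omega)
    calc (S.natDegree : ℝ) ≤ ((k + (P.natDegree + Q.natDegree) : ℕ) : ℝ) := by exact_mod_cast hS
      _ = (k:ℝ) + ((n:ℝ) + (m:ℝ)) := by push_cast [hNn, hMm]; ring
      _ ≤ _ := by ring_nf; exact le_rfl
  -- derivative identity
  have hF' : ∀ x ∈ Set.Ioi (0:ℝ), HasDerivAt F (Δ * g x) x := by
    intro x hx
    have hx0 : (0:ℝ) < x := hx
    have hx1 : (0:ℝ) < x + 1 := by linarith
    have h1 : HasDerivAt (fun y : ℝ => y ^ (q+1)) ((q+1) * x ^ q) x := by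
      have h := Real.hasDerivAt_rpow_const (x := x) (p := q+1) (Or.inl hx0.ne')
      simpa using h
    have h2 : HasDerivAt (fun y : ℝ => (y+1) ^ (1-p-q)) ((1-p-q) * (x+1) ^ (-(p+q))) x := by
      have h := (Real.hasDerivAt_rpow_const (x := x+1) (p := 1-p-q)
        (Or.inl hx1.ne')).comp x ((hasDerivAt_id x).add_const 1)
      have he : 1 - p - q - 1 = -(p+q) := by ring
      simpa [he, Function.comp_def] using h
    have h3 : HasDerivAt (fun y : ℝ => S.eval y) (S.derivative.eval x) x := S.hasDerivAt x
    have H := (h1.mul h2).mul h3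
    refine H.congr_deriv (Eq.symm ?_)
    have e1 : x ^ (q+1) = x ^ q * x := Real.rpow_add_one hx0.ne' q
    have e2 : (x+1:ℝ) ^ (1-p-q) = (x+1) ^ (-(p+q)) * (x+1) := by
      rw [show (1:ℝ)-p-q = -(p+q)+1 by ring, Real.rpow_add_one hx1.ne']
    rw [hgdef]
    simp only [Pi.mul_apply, e1, e2, hSev, hSdev, hTev, pow_succ]
    linear_combination (-(x^q * ((x+1:ℝ) ^ (-(p+q))) * ((x - r)^k) * Q.eval x)) * heqn x
      + (x^q * ((x+1:ℝ) ^ (-(p+q))) * ((x - r)^k) * P.eval x) * heqm x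
  
  -- continuity of g on Ioi 0
  have hgcont : ContinuousOn g (Set.Ioi (0:ℝ)) := by
    intro x hx
    have hx0 : (0:ℝ) < x := hx
    have c1 : ContinuousAt (fun y : ℝ => y ^ q) x :=
      Real.continuousAt_rpow_const x q (Or.inl hx0.ne')
    have c2 : ContinuousAt (fun y : ℝ => (y+1) ^ (-(p+q))) x :=
      ContinuousAt.rpow_const (by fun_prop) (Or.inl (by positivity))
    exact ((c1.mul c2).mul T.continuousAt).continuousWithinAt
  obtain ⟨C, hC0, hC⟩ := poly_growth_bound T
  set d : ℕ := T.natDegree with hd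
  -- integrability of g on Ioi 0
  have hgint : IntegrableOn g (Set.Ioi (0:ℝ)) := by
    have hsplit : Set.Ioc (0:ℝ) 1 ∪ Set.Ioi (1:ℝ) = Set.Ioi (0:ℝ) :=
      Set.Ioc_union_Ioi_eq_Ioi zero_le_one
    rw [← hsplit]
    refine MeasureTheory.IntegrableOn.union ?_ ?_
    · -- on Ioc 0 1
      have hdom : IntegrableOn (fun x : ℝ => (C * 2 ^ d) * x ^ q) (Set.Ioc (0:ℝ) 1) := by
        have h := intervalIntegral.intervalIntegrable_rpow' (a := (0:ℝ)) (b := 1) hq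
        rw [intervalIntegrable_iff_integrableOn_Ioc_of_le zero_le_one] at h
        exact h.const_mul _
      refine Integrable.mono' hdom
        ((hgcont.mono Set.Ioc_subset_Ioi_self).aestronglyMeasurable measurableSet_Ioc) ?_
      rw [ae_restrict_iff' measurableSet_Ioc]
      refine Filter.Eventually.of_forall fun x hx => ?_
      have hx0 : (0:ℝ) < x := hx.1
      have e : ‖g x‖ = x ^ q * ((x+1) ^ (-(p+q)) * |T.eval x|) := by
        rw [hgdef]
        simp only [Real.norm_eq_abs, abs_mul, abs_of_nonneg (Real.rpow_nonneg hx0.le q),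
          abs_of_nonneg (Real.rpow_nonneg (by linarith : (0:ℝ) ≤ x+1) (-(p+q)))]
        ring
      rw [e]
      have h1 : (x+1:ℝ) ^ (-(p+q)) ≤ 1 :=
        Real.rpow_le_one_of_one_le_of_nonpos (by linarith) (by linarith)
      have h2 : |T.eval x| ≤ C * 2 ^ d := by
        refine (hC x hx0.le).trans ?_
        have : (1+x:ℝ) ^ d ≤ 2 ^ d := pow_le_pow_left₀ (by linarith) (by linarith [hx.2]) d
        calc C * (1+x) ^ d ≤ C * 2 ^ d := by gcongr
          _ = C * 2 ^ d := rfl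
      calc x ^ q * ((x+1) ^ (-(p+q)) * |T.eval x|)
          ≤ x ^ q * (1 * (C * 2 ^ d)) := by
            refine mul_le_mul_of_nonneg_left ?_ (Real.rpow_nonneg hx0.le q)
            exact mul_le_mul h1 h2 (abs_nonneg _) zero_le_one
        _ = (C * 2 ^ d) * x ^ q := by ring
    · -- on Ioi 1
      have hlt : ((d:ℝ)) - p < -1 := by
        have := hTdeg
        linarith
      have hdom : IntegrableOn (fun x : ℝ => (C * 2 ^ d) * x ^ ((d:ℝ) - p))
          (Set.Ioi (1:ℝ)) :=
        (integrableOn_Ioi_rpow_of_lt hlt zero_lt_one).const_mul _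
      refine Integrable.mono' hdom
        ((hgcont.mono (Set.Ioi_subset_Ioi zero_le_one)).aestronglyMeasurable
          measurableSet_Ioi) ?_
      rw [ae_restrict_iff' measurableSet_Ioi]
      refine Filter.Eventually.of_forall fun x hx => ?_
      have hx1 : (1:ℝ) < x := hx
      have hx0 : (0:ℝ) < x := lt_trans zero_lt_one hx1
      have e : ‖g x‖ = x ^ q * ((x+1) ^ (-(p+q)) * |T.eval x|) := by
        rw [hgdef]
        simp only [Real.norm_eq_abs, abs_mul, abs_of_nonneg (Real.rpow_nonneg hx0.le q),
          abs_of_nonneg (Real.rpow_nonneg (by linarith : (0:ℝ) ≤ x+1) (-(p+q)))]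
        ring
      rw [e]
      have h1 : (x+1:ℝ) ^ (-(p+q)) ≤ x ^ (-(p+q)) :=
        Real.rpow_le_rpow_of_nonpos hx0 (by linarith) (by linarith)
      have h2 : |T.eval x| ≤ C * 2 ^ d * x ^ d := by
        refine (hC x hx0.le).trans ?_
        have : (1+x:ℝ) ^ d ≤ (2*x) ^ d := pow_le_pow_left₀ (by linarith) (by linarith) d
        calc C * (1+x) ^ d ≤ C * (2*x) ^ d := by gcongr
          _ = C * 2 ^ d * x ^ d := by rw [mul_pow]; ring
      have key : x ^ q * (x ^ (-(p+q)) * x ^ (d:ℕ)) = x ^ ((d:ℝ) - p) := by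
        rw [← Real.rpow_natCast x d, ← Real.rpow_add hx0, ← Real.rpow_add hx0]
        congr 1
        ring
      calc x ^ q * ((x+1) ^ (-(p+q)) * |T.eval x|)
          ≤ x ^ q * (x ^ (-(p+q)) * (C * 2 ^ d * x ^ d)) := by
            refine mul_le_mul_of_nonneg_left ?_ (Real.rpow_nonneg hx0.le q)
            exact mul_le_mul h1 h2 (abs_nonneg _) (Real.rpow_nonneg hx0.le _)
        _ = (C * 2 ^ d) * (x ^ q * (x ^ (-(p+q)) * x ^ (d:ℕ))) := by ring
        _ = (C * 2 ^ d) * x ^ ((d:ℝ) - p) := by rw [key]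
  -- limit of F at infinity
  obtain ⟨Cs, hCs0, hCs⟩ := poly_growth_bound S
  set ds : ℕ := S.natDegree with hds
  have hptail : (0:ℝ) < p - ((ds:ℝ) + 2) := by
    have := hSdeg
    linarith
  have hFlim : Tendsto F atTop (𝓝 (0:ℝ)) := by
    have htends : Tendsto (fun x : ℝ => Cs * (x+1) ^ (-(p - ((ds:ℝ) + 2)))) atTop (𝓝 0) := by
      have h0 : Tendsto (fun y : ℝ => y ^ (-(p - ((ds:ℝ)+2)))) atTop (𝓝 0) :=
        tendsto_rpow_neg_atTop hptail
      have h1 : Tendsto (fun x : ℝ => x + 1) atTop atTop :=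
        tendsto_atTop_add_const_right _ 1 tendsto_id
      have := (h0.comp h1).const_mul Cs
      simpa [Function.comp] using this
    refine squeeze_zero_norm' ?_ htends
    filter_upwards [eventually_ge_atTop (1:ℝ)] with x hx1
    have hx0 : (0:ℝ) < x := lt_of_lt_of_le zero_lt_one hx1
    have hx10 : (0:ℝ) < x + 1 := by linarith
    have e : ‖F x‖ = x ^ (q+1) * ((x+1) ^ (1-p-q) * |S.eval x|) := by
      rw [hFdef]
      simp only [Real.norm_eq_abs, abs_mul, abs_of_nonneg (Real.rpow_nonneg hx0.le (q+1)),
        abs_of_nonneg (Real.rpow_nonneg hx10.le (1-p-q))]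
      ring
    rw [e]
    have h1 : x ^ (q+1) ≤ (x+1) ^ (q+1) :=
      Real.rpow_le_rpow hx0.le (by linarith) (by linarith)
    have h2 : |S.eval x| ≤ Cs * (x+1) ^ (ds:ℕ) := by
      have := hCs x hx0.le
      rwa [show (1+x:ℝ) = x+1 by ring] at this
    have key : (x+1:ℝ) ^ (q+1) * ((x+1) ^ (1-p-q) * (x+1) ^ (ds:ℕ))
        = (x+1) ^ (-(p - ((ds:ℝ) + 2))) := by
      rw [← Real.rpow_natCast (x+1) ds, ← Real.rpow_add hx10, ← Real.rpow_add hx10]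
      congr 1
      ring
    calc x ^ (q+1) * ((x+1) ^ (1-p-q) * |S.eval x|)
        ≤ (x+1) ^ (q+1) * ((x+1) ^ (1-p-q) * (Cs * (x+1) ^ (ds:ℕ))) := by
          refine mul_le_mul h1 ?_ ?_ (Real.rpow_nonneg hx10.le _)
          · exact mul_le_mul_of_nonneg_left h2 (Real.rpow_nonneg hx10.le _)
          · positivity
      _ = Cs * ((x+1) ^ (q+1) * ((x+1) ^ (1-p-q) * (x+1) ^ (ds:ℕ))) := by ring
      _ = Cs * (x+1) ^ (-(p - ((ds:ℝ) + 2))) := by rw [key]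
  -- continuity of F at 0 from the right
  have hFcont : ContinuousWithinAt F (Set.Ici (0:ℝ)) 0 := by
    apply ContinuousAt.continuousWithinAt
    have c1 : ContinuousAt (fun y : ℝ => y ^ (q+1)) 0 :=
      Real.continuousAt_rpow_const 0 (q+1) (Or.inr (by linarith))
    have c2 : ContinuousAt (fun y : ℝ => (y+1) ^ (1-p-q)) 0 :=
      ContinuousAt.rpow_const (by fun_prop) (Or.inl (by norm_num))
    exact (c1.mul c2).mul S.continuousAt
  have hF0 : F 0 = 0 := by
    rw [hFdef]
    simp [Real.zero_rpow (by linarith : q + 1 ≠ 0)]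
  -- FTC on (0, ∞)
  have hint' : IntegrableOn (fun x => Δ * g x) (Set.Ioi (0:ℝ)) := hgint.const_mul Δ
  have key := MeasureTheory.integral_Ioi_of_hasDerivAt_of_tendsto hFcont hF' hint' hFlim
  rw [hF0, sub_zero] at key
  rw [integral_const_mul] at key
  have hΔne : Δ ≠ 0 := by
    rw [hΔdef]
    have hnm' : (n:ℝ) ≠ (m:ℝ) := by exact_mod_cast hnm
    rw [show (n:ℝ) * ((n:ℝ) + 1 + ((k:ℝ)+1) - p) - (m:ℝ) * ((m:ℝ) + 1 + ((k:ℝ)+1) - p)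
      = ((n:ℝ) - (m:ℝ)) * ((n:ℝ) + (m:ℝ) + (k:ℝ) + 2 - p) by ring]
    exact mul_ne_zero (sub_ne_zero.mpr hnm') (ne_of_lt (by linarith))
  have hgzero : ∫ x in Set.Ioi (0:ℝ), g x = 0 := by
    rcases mul_eq_zero.mp key with h | h
    · exact absurd h hΔne
    · exact h
  have hfin : Set.EqOn (fun x : ℝ => (x - r) ^ (k+1) * x ^ q * (x + 1) ^ (-(p + q))
      * P.eval x * Q.eval x) g (Set.Ioi 0) := by
    intro x _
    simp only [hgdef, hTev]
    ring
  exact (MeasureTheory.setIntegral_congr_fun measurableSet_Ioi hfin).trans hgzero
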